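/- arXiv:1807.08216 — 2 statements merged into one kernel-verified Lean document; each statement's English description precedes it below -/
import Mathlib

section
/- Under assumptions A1 (the noises N₁,...,Nₙ are independent and each symmetrically distributed about zero) and A2 (Rₙ is invertible), the ellipsoidal outer approximation contains the true parameter with probability at least p: P(θ* ∈ Θ̂̂ₙ) ≥ 1 − q/m = p, where Θ̂̂ₙ := {θ ∈ ℝ^d : (θ − θ̂ₙ)ᵀRₙ(θ − θ̂ₙ) ≤ r} and r is the q-th largest value among γ₁*, ..., γ_{m−1}* with γ_i* := sup{‖S_i(θ)‖² : ‖S₀(θ)‖² ≤ ‖S_i(θ)‖²}. -/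
open MeasureTheory ProbabilityTheory Matrix
open scoped ENNReal

noncomputable section

/-- Squared Euclidean norm of a vector in `ℝ^d`. -/
def spsNormSq {d : ℕ} (v : Fin d → ℝ) : ℝ := ∑ j, v j ^ 2

/-- A random sign: takes values `1` and `-1` with probability `1/2` each. -/
def IsRandomSign {Ω : Type*} [MeasurableSpace Ω] (μ : Measure Ω) (f : Ω → ℝ) : Prop :=
  μ {ω | f ω = 1} = 1 / 2 ∧ μ {ω | f ω = -1} = 1 / 2

/-- The (sign-perturbed) sums `S_i(θ)`. -/
def spsS {d n m : ℕ} (φ : Fin n → Fin d → ℝ) (Rhalf : Matrix (Fin d) (Fin d) ℝ)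
    (Y : Fin n → ℝ) (a : Fin m → Fin n → ℝ) (i : Fin m) (θ : Fin d → ℝ) : Fin d → ℝ :=
  Rhalf⁻¹ *ᵥ ((n : ℝ)⁻¹ • ∑ t, (a i t * (Y t - φ t ⬝ᵥ θ)) • φ t)

/-- `γ_i* = sup {‖S_i(θ)‖² : ‖S₀(θ)‖² ≤ ‖S_i(θ)‖²}`, in the extended reals. -/
def gammaStar {d n m : ℕ} [NeZero m] (φ : Fin n → Fin d → ℝ)
    (Rhalf : Matrix (Fin d) (Fin d) ℝ) (Y : Fin n → ℝ) (a : Fin m → Fin n → ℝ)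
    (i : Fin m) : EReal :=
  sSup ((fun θ : Fin d → ℝ => ((spsNormSq (spsS φ Rhalf Y a i θ) : ℝ) : EReal)) ''
    {θ : Fin d → ℝ | spsNormSq (spsS φ Rhalf Y a 0 θ) ≤ spsNormSq (spsS φ Rhalf Y a i θ)})

/-- The `q`-th largest element of a multiset of extended reals. -/
def qthLargestE (s : Multiset EReal) (q : ℕ) : EReal :=
  (s.sort (· ≤ ·)).getD (Multiset.card s - q) 0

instance {k : ℕ} : MeasurableSpace (Equiv.Perm (Fin k)) := ⊤

/-! ### Auxiliary lemmas -/

lemma le_qthLargestE (s : Multiset EReal) (q : ℕ) (hq : 0 < q) (hqs : q ≤ Multiset.card s)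
    (c : EReal) (hc : q ≤ Multiset.card (s.filter (fun x => c ≤ x))) :
    c ≤ qthLargestE s q := by
  classical
  set l := s.sort (· ≤ ·) with hl
  have hsort : l.Pairwise (· ≤ ·) := s.pairwise_sort _
  have hlen : l.length = Multiset.card s := s.length_sort _
  have hk : Multiset.card s - q < l.length := by omega
  by_contra hlt
  push_neg at hlt
  rw [qthLargestE, List.getD_eq_getElem _ _ hk] at hlt
  have hcount : (l.filter (fun x => decide (c ≤ x))).length ≤ q - 1 := by
    have hsub : (l.filter (fun x => decide (c ≤ x))).length
        = ((l.take (Multiset.card s - q + 1)).filter (fun x => decide (c ≤ x))).length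
          + ((l.drop (Multiset.card s - q + 1)).filter (fun x => decide (c ≤ x))).length := by
      rw [← List.length_append, ← List.filter_append, List.take_append_drop]
    have h1 : ((l.take (Multiset.card s - q + 1)).filter (fun x => decide (c ≤ x))).length = 0 := by
      rw [List.length_eq_zero_iff, List.filter_eq_nil_iff]
      intro a ha
      have := List.mem_take_iff_getElem.mp ha
      obtain ⟨j, hj, rfl⟩ := this
      have hjlt : j ≤ Multiset.card s - q := by omega
      have : l[j] ≤ l[Multiset.card s - q] := by
        have := hsort.rel_get_of_le (a := ⟨j, by omega⟩) (b := ⟨Multiset.card s - q, hk⟩)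
          (by simpa [Fin.le_def] using hjlt)
        simpa using this
      simp only [decide_eq_true_eq]
      intro hca
      exact absurd (le_trans hca this) (not_le.mpr hlt)
    have h2 : ((l.drop (Multiset.card s - q + 1)).filter (fun x => decide (c ≤ x))).length
        ≤ l.length - (Multiset.card s - q + 1) := by
      calc _ ≤ (l.drop (Multiset.card s - q + 1)).length := List.length_filter_le _ _
        _ = _ := List.length_drop
    omega
  have : (Multiset.filter (fun x => c ≤ x) s).card
      = (l.filter (fun x => decide (c ≤ x))).length := by
    have : s = (l : Multiset EReal) := (s.sort_eq _).symm
    rw [this]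
    simp [Multiset.filter_coe]
  omega

lemma rank_count_le {ι : Type*} [Fintype ι] [DecidableEq ι] (z : ι → ℝ) (k : ℕ) :
    (Finset.univ.filter (fun i => k ≤ (Finset.univ.filter (fun j => z j < z i)).card)).card
      ≤ Fintype.card ι - k := by
  classical
  set A := Finset.univ.filter
    (fun i => k ≤ (Finset.univ.filter (fun j => z j < z i)).card) with hA
  rcases A.eq_empty_or_nonempty with h | h
  · simp [h]
  obtain ⟨i₀, hi₀A, hmin⟩ := A.exists_min_image z h
  have hi₀ : k ≤ (Finset.univ.filter (fun j => z j < z i₀)).card := by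
    simpa [hA] using hi₀A
  have hsub : A ⊆ Finset.univ.filter (fun j => ¬ (z j < z i₀)) := by
    intro i hi
    simp only [Finset.mem_filter, Finset.mem_univ, true_and, not_lt]
    exact hmin i hi
  have hcard : (Finset.univ.filter (fun j => z j < z i₀)).card
      + (Finset.univ.filter (fun j => ¬ (z j < z i₀))).card = Fintype.card ι := by
    rw [Finset.card_filter_add_card_filter_not]
    simp
  have := Finset.card_le_card hsub
  omega

lemma card_filter_perm {ι : Type*} [Fintype ι] [DecidableEq ι] (e : Equiv.Perm ι)
    (p : ι → Prop) [DecidablePred p] :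
    (Finset.univ.filter (fun j => p (e j))).card = (Finset.univ.filter p).card := by
  apply Finset.card_bij (fun j _ => e j)
  · intro a ha; simp only [Finset.mem_filter, Finset.mem_univ, true_and] at *; exact ha
  · intro a _ b _ hab; exact e.injective hab
  · intro b hb; refine ⟨e.symm b, ?_, by simp⟩
    simp only [Finset.mem_filter, Finset.mem_univ, true_and] at *; simpa using hb

lemma measure_eq_inter_support {X : Type*} [MeasurableSpace X] (ρ : Measure X) (S A : Set X)
    (hρ : ρ Sᶜ = 0) : ρ A = ρ (A ∩ S) := by
  have h1 : ρ A ≤ ρ (A ∩ S) + ρ (A ∩ Sᶜ) :=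
    le_trans (measure_mono (by intro x hx; by_cases hxS : x ∈ S <;> simp [hx, hxS]))
      (measure_union_le _ _)
  have h0 : ρ (A ∩ Sᶜ) = 0 := measure_mono_null Set.inter_subset_right hρ
  exact le_antisymm (by simpa [h0] using h1) (measure_mono Set.inter_subset_left)

lemma measure_ext_of_finite_support {X : Type*} [MeasurableSpace X] [MeasurableSingletonClass X]
    (ρ₁ ρ₂ : Measure X) (S : Set X) (hS : S.Finite)
    (h1 : ρ₁ Sᶜ = 0) (h2 : ρ₂ Sᶜ = 0)
    (h : ∀ x ∈ S, ρ₁ {x} = ρ₂ {x}) : ρ₁ = ρ₂ := by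
  classical
  ext A hA
  have key : ∀ ρ : Measure X, ρ Sᶜ = 0 →
      ρ A = ∑ x ∈ hS.toFinset.filter (· ∈ A), ρ {x} := by
    intro ρ hρ
    rw [measure_eq_inter_support ρ S A hρ]
    have hset : A ∩ S = ⋃ x ∈ hS.toFinset.filter (· ∈ A), {x} := by
      ext y; simp [and_comm]
    rw [hset, measure_biUnion_finset ?_ (fun _ _ => measurableSet_singleton _)]
    · intro x _ y _ hxy
      simp [Function.onFun, Set.disjoint_singleton, hxy]
  rw [key ρ₁ h1, key ρ₂ h2]
  apply Finset.sum_congr rfl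
  intro x hx
  exact h x (by simpa using (Finset.mem_filter.mp hx).1)

lemma map_eq_pi_of_iIndepFun {ι : Type*} [Fintype ι] {Ω : Type*} [MeasurableSpace Ω]
    (μ : Measure Ω) [IsProbabilityMeasure μ] (f : ι → Ω → ℝ)
    (hmeas : ∀ i, Measurable (f i))
    (h : iIndepFun f μ) :
    μ.map (fun ω i => f i ω) = Measure.pi (fun i => μ.map (f i)) := by
  haveI : ∀ i, IsProbabilityMeasure (μ.map (f i)) :=
    fun i => Measure.isProbabilityMeasure_map (hmeas i).aemeasurable
  refine (Measure.pi_eq fun s hs => ?_).symm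
  rw [Measure.map_apply (measurable_pi_lambda _ fun i => hmeas i) (MeasurableSet.univ_pi hs)]
  have hpre : (fun ω i => f i ω) ⁻¹' Set.pi Set.univ s = ⋂ i ∈ Finset.univ, f i ⁻¹' s i := by
    ext ω; simp [Set.mem_pi]
  rw [hpre, h.measure_inter_preimage_eq_mul Finset.univ (fun i _ => hs i)]
  exact Finset.prod_congr rfl fun i _ => (Measure.map_apply (hmeas i) (hs i)).symm

lemma pi_map_flip {n : ℕ} (ν : Fin n → Measure ℝ) [∀ t, IsProbabilityMeasure (ν t)]
    (hsymm : ∀ t, (ν t).map Neg.neg = ν t) (ε : Fin n → ℝ) (hε : ∀ t, ε t = 1 ∨ ε t = -1) :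
    (Measure.pi ν).map (fun x t => ε t * x t) = Measure.pi ν := by
  have hmeas : Measurable (fun (x : Fin n → ℝ) t => ε t * x t) :=
    measurable_pi_lambda _ fun t => (measurable_pi_apply t).const_mul _
  refine (Measure.pi_eq (μ := ν) fun s hs => ?_).symm
  rw [Measure.map_apply hmeas (MeasurableSet.univ_pi hs)]
  have hpre : (fun (x : Fin n → ℝ) t => ε t * x t) ⁻¹' Set.pi Set.univ s
      = Set.pi Set.univ (fun t => (fun y => ε t * y) ⁻¹' s t) := by
    ext x; simp [Set.mem_pi]
  rw [hpre, Measure.pi_pi]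
  refine Finset.prod_congr rfl fun t _ => ?_
  rcases hε t with h | h
  · congr 1; ext y; simp [h]
  · have : (fun y => ε t * y) ⁻¹' s t = Neg.neg ⁻¹' (s t) := by
      ext y; simp [h]
    rw [this, ← Measure.map_apply measurable_neg (hs t), hsymm t]

section SignMeasures
variable {m n : ℕ} [NeZero m]

/-- support sets for the sign measures -/
def signF (p : Fin m × Fin n) : Set ℝ := if p.1 = 0 then {1} else {1, -1}

lemma signF_finite (p : Fin m × Fin n) : (signF p).Finite := by
  unfold signF; split <;> simp

lemma signF_measurable (p : Fin m × Fin n) : MeasurableSet (signF p) :=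
  (signF_finite p).measurableSet

lemma pi_sign_support_null (c : Fin m × Fin n → Measure ℝ)
    [∀ p, IsProbabilityMeasure (c p)]
    (h0 : ∀ t, c (0, t) = Measure.dirac 1)
    (h1 : ∀ p : Fin m × Fin n, p.1 ≠ 0 →
      c p {1} = 1/2 ∧ c p {-1} = 1/2 ∧ c p ({1, -1} : Set ℝ)ᶜ = 0) :
    Measure.pi c (Set.pi Set.univ signF)ᶜ = 0 := by
  classical
  have hsub : (Set.pi Set.univ signF)ᶜ
      ⊆ ⋃ p : Fin m × Fin n, (fun a => a p) ⁻¹' (signF p)ᶜ := by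
    intro a ha
    simp only [Set.mem_compl_iff, Set.mem_pi, Set.mem_univ, true_implies, not_forall] at ha
    obtain ⟨p, hp⟩ := ha
    exact Set.mem_iUnion.mpr ⟨p, hp⟩
  refine measure_mono_null hsub (measure_iUnion_null fun p => ?_)
  have : (fun a : (Fin m × Fin n) → ℝ => a p) ⁻¹' (signF p)ᶜ
      = Set.pi Set.univ (Function.update (fun _ => Set.univ) p (signF p)ᶜ) := by
    ext a
    simp only [Set.mem_preimage, Set.mem_pi, Set.mem_univ, true_implies]
    constructor
    · intro h q
      by_cases hq : q = p
      · subst hq; simpa using h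
      · simp [Function.update_of_ne hq]
    · intro h; have := h p; simpa using this
  rw [this, Measure.pi_pi]
  refine Finset.prod_eq_zero (Finset.mem_univ p) ?_
  rw [Function.update_self]
  by_cases hp : p.1 = 0
  · have hp' : p = (0, p.2) := Prod.ext hp rfl
    rw [hp', h0 p.2,
      Measure.dirac_apply' _ (signF_measurable ((0 : Fin m), p.2)).compl]
    simp [signF, Set.indicator]
  · have := (h1 p hp).2.2
    simpa [signF, hp] using this

lemma pi_sign_map_invariant (c : Fin m × Fin n → Measure ℝ)
    [∀ p, IsProbabilityMeasure (c p)]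
    (h0 : ∀ t, c (0, t) = Measure.dirac 1)
    (h1 : ∀ p : Fin m × Fin n, p.1 ≠ 0 →
      c p {1} = 1/2 ∧ c p {-1} = 1/2 ∧ c p ({1, -1} : Set ℝ)ᶜ = 0)
    (i : Fin m) :
    (Measure.pi c).map
      (fun a (p : Fin m × Fin n) => a (Equiv.swap 0 i p.1, p.2) * a (i, p.2))
      = Measure.pi c := by
  classical
  set σ := Equiv.swap (0 : Fin m) i with hσ
  set T : ((Fin m × Fin n) → ℝ) → ((Fin m × Fin n) → ℝ) :=
    fun a p => a (σ p.1, p.2) * a (i, p.2) with hT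
  have hTmeas : Measurable T :=
    measurable_pi_lambda _ fun p => (measurable_pi_apply _).mul (measurable_pi_apply _)
  set S : Set ((Fin m × Fin n) → ℝ) := Set.pi Set.univ signF with hS
  have hSfin : S.Finite := Set.Finite.pi fun p => signF_finite p
  have hSmeas : MeasurableSet S := MeasurableSet.univ_pi fun p => signF_measurable p
  have hmem1 : ∀ s ∈ S, ∀ t, s (0, t) = 1 := by
    intro s hs t
    have := hs (0, t) (Set.mem_univ _)
    simpa [signF] using this
  have hmempm : ∀ s ∈ S, ∀ p, s p = 1 ∨ s p = -1 := by
    intro s hs p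
    have := hs p (Set.mem_univ _)
    unfold signF at this
    split at this
    · left; simpa using this
    · simpa using this
  have hTS : ∀ s ∈ S, T s ∈ S := by
    intro s hs p _
    unfold signF
    by_cases hp : p.1 = 0
    · simp only [hp, if_pos rfl]
      have : T s p = s (i, p.2) * s (i, p.2) := by simp [hT, hp, hσ, Equiv.swap_apply_left]
      rw [this]
      rcases hmempm s hs (i, p.2) with h | h <;> simp [h]
    · simp only [if_neg hp]
      rcases hmempm s hs (σ p.1, p.2) with h | h <;>
        rcases hmempm s hs (i, p.2) with h' | h' <;>
          simp [hT, h, h', Set.mem_insert_iff]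
  have hTT : ∀ s ∈ S, T (T s) = s := by
    intro s hs
    funext p
    have h2 : T (T s) p = (s (σ (σ p.1), p.2) * s (i, p.2)) * (s (σ i, p.2) * s (i, p.2)) := by
      simp [hT]
    have e1 : σ (σ p.1) = p.1 := by simp [hσ]
    have e2 : σ i = 0 := by simp [hσ]
    rw [h2, e1, e2, hmem1 s hs p.2]
    have hp : s (p.1, p.2) = s p := by rw [Prod.mk.eta]
    rcases hmempm s hs (i, p.2) with h | h <;> simp [h, hp]
  have hmass : ∀ s ∈ S, Measure.pi c {s} = ∏ p : Fin m × Fin n,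
      (if p.1 = 0 then (1 : ℝ≥0∞) else 1/2) := by
    intro s hs
    have : ({s} : Set ((Fin m × Fin n) → ℝ)) = Set.pi Set.univ (fun p => {s p}) := by
      ext a; simp [funext_iff, Set.mem_pi]
    rw [this, Measure.pi_pi]
    refine Finset.prod_congr rfl fun p _ => ?_
    by_cases hp : p.1 = 0
    · have hp' : p = (0, p.2) := Prod.ext hp rfl
      rw [if_pos hp, hp', h0 p.2, hmem1 s hs p.2]
      simp
    · rw [if_neg hp]
      rcases hmempm s hs p with h | h
      · rw [h]; exact (h1 p hp).1
      · rw [h]; exact (h1 p hp).2.1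
  have hnull : Measure.pi c Sᶜ = 0 := pi_sign_support_null c h0 h1
  refine measure_ext_of_finite_support _ _ S hSfin ?_ hnull ?_
  · rw [Measure.map_apply hTmeas hSmeas.compl]
    refine measure_mono_null ?_ hnull
    intro a ha
    simp only [Set.mem_preimage, Set.mem_compl_iff] at *
    intro haS
    exact ha (hTS a haS)
  · intro s hs
    rw [Measure.map_apply hTmeas (measurableSet_singleton s)]
    have hpre : T ⁻¹' {s} ∩ S = {T s} := by
      ext a
      simp only [Set.mem_inter_iff, Set.mem_preimage, Set.mem_singleton_iff]
      constructor
      · rintro ⟨hTa, haS⟩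
        rw [← hTT a haS, hTa]
      · rintro rfl
        exact ⟨hTT s hs, hTS s hs⟩
    calc Measure.pi c (T ⁻¹' {s}) = Measure.pi c (T ⁻¹' {s} ∩ S) :=
          measure_eq_inter_support _ S _ hnull
      _ = Measure.pi c {T s} := by rw [hpre]
      _ = Measure.pi c {s} := by rw [hmass _ (hTS s hs), hmass s hs]

end SignMeasures

lemma prod_map_skew {A X : Type*} [MeasurableSpace A] [MeasurableSpace X]
    (να : Measure A) (νN : Measure X) [IsProbabilityMeasure να] [IsProbabilityMeasure νN]
    (T : A → A) (hTmeas : Measurable T) (hT : να.map T = να)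
    (f : A → X → X) (hfmeas : Measurable (fun p : A × X => f p.1 p.2))
    (S : Set A) (hnull : να Sᶜ = 0)
    (hflip : ∀ a ∈ S, νN.map (f a) = νN) :
    (να.prod νN).map (fun p : A × X => (T p.1, f p.1 p.2)) = να.prod νN := by
  classical
  have hΨmeas : Measurable (fun p : A × X => (T p.1, f p.1 p.2)) :=
    (hTmeas.comp measurable_fst).prodMk hfmeas
  refine (Measure.prod_eq fun s t hs ht => ?_).symm
  rw [Measure.map_apply hΨmeas (hs.prod ht)]
  have hmeas_pre : MeasurableSet ((fun p : A × X => (T p.1, f p.1 p.2)) ⁻¹' s ×ˢ t) :=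
    hΨmeas (hs.prod ht)
  rw [Measure.prod_apply hmeas_pre]
  have hae : ∀ᵐ a ∂να,
      νN (Prod.mk a ⁻¹' ((fun p : A × X => (T p.1, f p.1 p.2)) ⁻¹' s ×ˢ t))
        = Set.indicator (T ⁻¹' s) (fun _ => νN t) a := by
    filter_upwards [measure_eq_zero_iff_ae_notMem.mp hnull] with a haS
    have haS' : a ∈ S := not_not.mp haS
    have hfa : Measurable (f a) := hfmeas.of_uncurry_left
    have hsec : Prod.mk a ⁻¹' ((fun p : A × X => (T p.1, f p.1 p.2)) ⁻¹' s ×ˢ t)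
        = if T a ∈ s then f a ⁻¹' t else ∅ := by
      ext x
      by_cases h : T a ∈ s <;> simp [Set.mem_prod, h]
    rw [hsec]
    by_cases h : T a ∈ s
    · rw [if_pos h, Set.indicator_of_mem (show a ∈ T ⁻¹' s from h),
        ← Measure.map_apply hfa ht, hflip a haS']
    · rw [if_neg h, Set.indicator_of_notMem (show a ∉ T ⁻¹' s from h), measure_empty]
  rw [lintegral_congr_ae hae, lintegral_indicator (hTmeas hs)]
  simp only [MeasureTheory.lintegral_const]
  rw [Measure.restrict_apply_univ, ← Measure.map_apply hTmeas hs, hT, mul_comm]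

/-! ### Main theorem -/

/-- Under A1 and A2, the ellipsoidal outer approximation
`Θ̂̂ₙ = {θ : (θ−θ̂ₙ)ᵀ Rₙ (θ−θ̂ₙ) ≤ r}`, with `r` the `q`-th largest of the `γ_i*`,
contains the true parameter with probability at least `p = 1 − q/m`. -/
theorem sps_outer_approximation_confidence
    {Ω : Type*} [MeasurableSpace Ω] (μ : Measure Ω) [IsProbabilityMeasure μ]
    (d n m q : ℕ) [NeZero m] (hn : 0 < n) (hq : 0 < q) (hqm : q < m)
    (φ : Fin n → Fin d → ℝ)
    (Rn : Matrix (Fin d) (Fin d) ℝ)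
    (hRn : Rn = (n : ℝ)⁻¹ • ∑ t, vecMulVec (φ t) (φ t))
    (hRnPD : Rn.PosDef)
    (Rhalf : Matrix (Fin d) (Fin d) ℝ)
    (hRhalfPD : Rhalf.PosDef)
    (hRhalf : Rhalf * Rhalfᵀ = Rn)
    (θstar : Fin d → ℝ)
    (N : Fin n → Ω → ℝ)
    (hNmeas : ∀ t, Measurable (N t))
    (hNindep : iIndepFun N μ)
    (hNsymm : ∀ t, μ.map (N t) = μ.map (fun ω => -(N t ω)))
    (α : Fin m → Fin n → Ω → ℝ)
    (hα0 : ∀ t ω, α 0 t ω = 1)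
    (hαmeas : ∀ i t, Measurable (α i t))
    (hαindep : iIndepFun
      (fun p : Fin m × Fin n => α p.1 p.2) μ)
    (hαsign : ∀ i : Fin m, i ≠ 0 → ∀ t, IsRandomSign μ (α i t))
    (π : Ω → Equiv.Perm (Fin m))
    (hπ : ∀ σ : Equiv.Perm (Fin m), μ {ω | π ω = σ} = (m.factorial : ℝ≥0∞)⁻¹)
    (hgroups : iIndep
      ![MeasurableSpace.comap (fun ω (t : Fin n) => N t ω) inferInstance,
        MeasurableSpace.comap (fun ω (p : Fin m × Fin n) => α p.1 p.2 ω) inferInstance,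
        MeasurableSpace.comap π inferInstance] μ)
    -- the (random) least-squares estimate
    (θhat : Ω → Fin d → ℝ)
    (hθhat : ∀ ω, θhat ω = (∑ t, vecMulVec (φ t) (φ t))⁻¹ *ᵥ
      ∑ t, (φ t ⬝ᵥ θstar + N t ω) • φ t) :
    ENNReal.ofReal (1 - (q : ℝ) / m) ≤
      μ {ω | (((θstar - θhat ω) ⬝ᵥ (Rn *ᵥ (θstar - θhat ω)) : ℝ) : EReal) ≤
        qthLargestE ((Finset.univ.filter (fun i : Fin m => i ≠ 0)).val.map
          (fun i => gammaStar φ Rhalf (fun t => φ t ⬝ᵥ θstar + N t ω)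
            (fun i t => α i t ω) i)) q} := by
  classical
  set EA := (Fin m × Fin n) → ℝ with hEA
  set EN := (Fin n) → ℝ with hEN
  set Afun : Ω → EA := fun ω p => α p.1 p.2 ω with hAfun
  set Nvec : Ω → EN := fun ω t => N t ω with hNvec
  set pairmap : Ω → EA × EN := fun ω => (Afun ω, Nvec ω) with hpairmap
  set ζ : Fin m → EA × EN → ℝ := fun j e =>
    spsNormSq (Rhalf⁻¹ *ᵥ ((n : ℝ)⁻¹ • ∑ t, (e.1 (j, t) * e.2 t) • φ t)) with hζ
  -- ζ matches spsS at θstar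
  have hZeq : ∀ j ω, spsNormSq (spsS φ Rhalf (fun t => φ t ⬝ᵥ θstar + N t ω)
      (fun i t => α i t ω) j θstar) = ζ j (pairmap ω) := by
    intro j ω
    simp only [spsS, add_sub_cancel_left, hζ, hpairmap, hAfun, hNvec]
  -- the quadratic form equals ζ 0
  have hL : ∀ ω, (θstar - θhat ω) ⬝ᵥ (Rn *ᵥ (θstar - θhat ω)) = ζ 0 (pairmap ω) := by
    intro ω
    have hζ0 : ζ 0 (pairmap ω)
        = spsNormSq (Rhalf⁻¹ *ᵥ ((n : ℝ)⁻¹ • ∑ t, N t ω • φ t)) := by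
      simp only [hζ, hpairmap, hAfun, hNvec, hα0, one_mul]
    rw [hζ0]
    have hnne : (n : ℝ) ≠ 0 := Nat.cast_ne_zero.mpr hn.ne'
    set M : Matrix (Fin d) (Fin d) ℝ := ∑ t, vecMulVec (φ t) (φ t) with hM
    have hMRn : M = (n : ℝ) • Rn := by
      rw [hRn, smul_smul, mul_inv_cancel₀ hnne, one_smul]
    have hdetM : IsUnit M.det := by
      rw [hMRn, Matrix.det_smul]
      exact isUnit_iff_ne_zero.mpr (mul_ne_zero (pow_ne_zero _ hnne) hRnPD.det_pos.ne')
    have hMM : M * M⁻¹ = 1 := Matrix.mul_nonsing_inv M hdetM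
    have hMM' : M⁻¹ * M = 1 := Matrix.nonsing_inv_mul M hdetM
    set u : Fin d → ℝ := ∑ t, N t ω • φ t with hu
    have hMv : ∀ x : Fin d → ℝ, M *ᵥ x = ∑ t, (φ t ⬝ᵥ x) • φ t := by
      intro x
      ext k
      simp only [hM, Matrix.mulVec, dotProduct, Matrix.sum_apply, Finset.sum_apply,
        Matrix.vecMulVec_apply, Pi.smul_apply, smul_eq_mul, Finset.sum_mul, Finset.mul_sum]
      rw [Finset.sum_comm]
      refine Finset.sum_congr rfl fun t _ => Finset.sum_congr rfl fun l _ => by ring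
    have hθ : θstar - θhat ω = -(M⁻¹ *ᵥ u) := by
      have hsplit : (∑ t, (φ t ⬝ᵥ θstar + N t ω) • φ t) = M *ᵥ θstar + u := by
        rw [hMv θstar, hu, ← Finset.sum_add_distrib]
        exact Finset.sum_congr rfl fun t _ => by rw [add_smul]
      rw [hθhat, hsplit, Matrix.mulVec_add, Matrix.mulVec_mulVec, hMM', Matrix.one_mulVec]
      abel
    have hRninv : Rn⁻¹ = (n : ℝ) • M⁻¹ := by
      apply Matrix.inv_eq_right_inv
      rw [hRn, Matrix.smul_mul, Matrix.mul_smul, smul_smul, inv_mul_cancel₀ hnne, one_smul, hMM]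
    have hRhalfinv : (Rhalf⁻¹)ᵀ * Rhalf⁻¹ = Rn⁻¹ := by
      rw [Matrix.transpose_nonsing_inv, ← Matrix.mul_inv_rev, hRhalf]
    have hLHS : (θstar - θhat ω) ⬝ᵥ (Rn *ᵥ (θstar - θhat ω))
        = (n : ℝ)⁻¹ * ((M⁻¹ *ᵥ u) ⬝ᵥ u) := by
      rw [hθ, Matrix.mulVec_neg, neg_dotProduct, dotProduct_neg, neg_neg,
        hRn, Matrix.smul_mulVec, dotProduct_smul, Matrix.mulVec_mulVec,
        hMM, Matrix.one_mulVec, smul_eq_mul]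
    rw [hLHS]
    have hsm : Rhalf⁻¹ *ᵥ ((n : ℝ)⁻¹ • u) = (n : ℝ)⁻¹ • (Rhalf⁻¹ *ᵥ u) :=
      Matrix.mulVec_smul _ _ _
    have hnormdot : ∀ v : Fin d → ℝ, spsNormSq v = v ⬝ᵥ v := by
      intro v; simp [spsNormSq, dotProduct, sq]
    rw [hsm, hnormdot, smul_dotProduct, dotProduct_smul, smul_eq_mul, smul_eq_mul]
    have hww : (Rhalf⁻¹ *ᵥ u) ⬝ᵥ (Rhalf⁻¹ *ᵥ u) = (n : ℝ) * ((M⁻¹ *ᵥ u) ⬝ᵥ u) := by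
      rw [Matrix.dotProduct_mulVec (Rhalf⁻¹ *ᵥ u) Rhalf⁻¹ u]
      have : Matrix.vecMul (Rhalf⁻¹ *ᵥ u) Rhalf⁻¹ = ((Rhalf⁻¹)ᵀ * Rhalf⁻¹) *ᵥ u := by
        rw [← Matrix.mulVec_transpose, Matrix.mulVec_mulVec]
      rw [this, hRhalfinv, hRninv, Matrix.smul_mulVec, smul_dotProduct, smul_eq_mul]
    rw [hww]
    field_simp
  -- measurability of ζ
  have hζmeas : ∀ j, Measurable (ζ j) := by
    intro j
    have heq : ζ j = fun e : EA × EN => ∑ k, (∑ l, Rhalf⁻¹ k l *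
        ((n : ℝ)⁻¹ * ∑ t, (e.1 (j, t) * e.2 t) * φ t l)) ^ 2 := by
      funext e
      simp [hζ, spsNormSq, Matrix.mulVec, dotProduct, Finset.sum_apply, Pi.smul_apply,
        smul_eq_mul]
    rw [heq]
    refine Finset.measurable_sum _ fun k _ => ?_
    refine Measurable.pow_const ?_ 2
    refine Finset.measurable_sum _ fun l _ => ?_
    refine measurable_const.mul (measurable_const.mul ?_)
    refine Finset.measurable_sum _ fun t _ => ?_
    exact (((measurable_pi_apply (j, t)).comp measurable_fst).mul
      ((measurable_pi_apply t).comp measurable_snd)).mul_const _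
  have hAmeas : Measurable Afun := measurable_pi_lambda _ fun p => hαmeas p.1 p.2
  have hNvmeas : Measurable Nvec := measurable_pi_lambda _ fun t => hNmeas t
  have hpairmeas : Measurable pairmap := hAmeas.prodMk hNvmeas
  -- the bad events
  set Bt : Fin m → Set (EA × EN) := fun i =>
    {e | m - q ≤ (Finset.univ.filter (fun j => ζ j e < ζ i e)).card} with hBt
  have hBtmeas : ∀ i, MeasurableSet (Bt i) := by
    intro i
    have hcard : ∀ e : EA × EN, (Finset.univ.filter (fun j => ζ j e < ζ i e)).card
        = ∑ j : Fin m, if ζ j e < ζ i e then 1 else 0 := by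
      intro e; rw [Finset.card_filter]
    have hfmeas : Measurable (fun e : EA × EN =>
        ∑ j : Fin m, if ζ j e < ζ i e then (1:ℕ) else 0) := by
      refine Finset.measurable_sum _ fun j _ => ?_
      exact Measurable.ite (measurableSet_lt (hζmeas j) (hζmeas i))
        measurable_const measurable_const
    have hseteq : Bt i = (fun e : EA × EN =>
        ∑ j : Fin m, if ζ j e < ζ i e then (1:ℕ) else 0) ⁻¹' (Set.Ici (m - q)) := by
      ext e
      rw [hBt]
      rw [Set.mem_preimage, Set.mem_Ici, Set.mem_setOf_eq, hcard e]
    rw [hseteq]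
    exact hfmeas (measurableSet_Ici)
  -- laws
  set c : Fin m × Fin n → Measure ℝ := fun p => μ.map (α p.1 p.2) with hc
  set να : Measure EA := Measure.pi c with hνα
  set νN : Measure EN := Measure.pi (fun t => μ.map (N t)) with hνN
  haveI hcprob : ∀ p, IsProbabilityMeasure (c p) :=
    fun p => Measure.isProbabilityMeasure_map (hαmeas p.1 p.2).aemeasurable
  haveI hNprob : ∀ t, IsProbabilityMeasure (μ.map (N t)) :=
    fun t => Measure.isProbabilityMeasure_map (hNmeas t).aemeasurable
  haveI : IsProbabilityMeasure να := by rw [hνα]; infer_instance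
  haveI : IsProbabilityMeasure νN := by rw [hνN]; infer_instance
  set ν : Measure (EA × EN) := να.prod νN with hν
  haveI : IsProbabilityMeasure ν := by rw [hν]; infer_instance
  -- facts about the sign laws
  have h0 : ∀ t, c (0, t) = Measure.dirac 1 := by
    intro t
    have : α 0 t = fun _ => (1:ℝ) := funext fun ω => hα0 t ω
    rw [hc]
    show μ.map (α 0 t) = Measure.dirac 1
    rw [this, Measure.map_const, measure_univ, one_smul]
  have h1 : ∀ p : Fin m × Fin n, p.1 ≠ 0 →
      c p {1} = 1/2 ∧ c p {-1} = 1/2 ∧ c p ({1, -1} : Set ℝ)ᶜ = 0 := by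
    intro p hp
    have hf : Measurable (α p.1 p.2) := hαmeas p.1 p.2
    have h := hαsign p.1 hp p.2
    have h1' : μ.map (α p.1 p.2) {1} = μ {ω | α p.1 p.2 ω = 1} := by
      rw [Measure.map_apply hf (measurableSet_singleton _)]; rfl
    have h2' : μ.map (α p.1 p.2) {-1} = μ {ω | α p.1 p.2 ω = -1} := by
      rw [Measure.map_apply hf (measurableSet_singleton _)]; rfl
    refine ⟨h1'.trans h.1, h2'.trans h.2, ?_⟩
    have hmeas1 : MeasurableSet {ω | α p.1 p.2 ω = 1} := hf (measurableSet_singleton 1)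
    have hmeas2 : MeasurableSet {ω | α p.1 p.2 ω = -1} := hf (measurableSet_singleton (-1))
    have hdisj : Disjoint {ω | α p.1 p.2 ω = 1} {ω | α p.1 p.2 ω = -1} := by
      rw [Set.disjoint_left]
      intro ω hω1 hω2
      simp only [Set.mem_setOf_eq] at *
      rw [hω1] at hω2; norm_num at hω2
    have hunion : μ ({ω | α p.1 p.2 ω = 1} ∪ {ω | α p.1 p.2 ω = -1}) = 1 := by
      have h11 : (1:ℝ≥0∞) + 1 = 2 := one_add_one_eq_two
      rw [measure_union hdisj hmeas2, h.1, h.2, ENNReal.div_add_div_same, h11]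
      exact ENNReal.div_self (by norm_num) (by norm_num)
    have hseteq : (α p.1 p.2) ⁻¹' (({1, -1} : Set ℝ)ᶜ)
        = ({ω | α p.1 p.2 ω = 1} ∪ {ω | α p.1 p.2 ω = -1})ᶜ := by
      ext ω; simp [not_or]
    show μ.map (α p.1 p.2) ({1, -1} : Set ℝ)ᶜ = 0
    rw [Measure.map_apply hf ((MeasurableSet.insert (measurableSet_singleton _) _).compl),
      hseteq, prob_compl_eq_one_sub (hmeas1.union hmeas2), hunion, tsub_self]
  -- the joint law of (α, N) is the product of pi laws
  have hmap : μ.map pairmap = ν := by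
    have hIF : IndepFun Afun Nvec μ := by
      have h01 := hgroups.indep (i := 1) (j := 0) (by decide)
      rw [IndepFun_iff_Indep]
      simpa [hAfun, hNvec] using h01
    rw [hpairmap]
    rw [indepFun_iff_map_prod_eq_prod_map_map hAmeas.aemeasurable hNvmeas.aemeasurable] at hIF
    rw [hIF, hν, hνα, hνN, hAfun, hNvec]
    rw [map_eq_pi_of_iIndepFun μ (fun p : Fin m × Fin n => α p.1 p.2)
      (fun p => hαmeas p.1 p.2) hαindep]
    rw [map_eq_pi_of_iIndepFun μ N hNmeas hNindep]
  -- support of να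
  set SA : Set EA := Set.pi Set.univ signF with hSA
  have hnullA : να SAᶜ = 0 := by
    rw [hνα, hSA]; exact pi_sign_support_null c h0 h1
  -- symmetric noise laws
  have hsymm' : ∀ t, (μ.map (N t)).map Neg.neg = μ.map (N t) := by
    intro t
    rw [Measure.map_map measurable_neg (hNmeas t)]
    have : Neg.neg ∘ N t = fun ω => -(N t ω) := rfl
    rw [this]
    exact (hNsymm t).symm
  -- exchangeability
  have hswap : ∀ i : Fin m, i ≠ 0 → ν (Bt i) = ν (Bt 0) := by
    intro i hi
    set σ := Equiv.swap (0 : Fin m) i with hσdef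
    set T : EA → EA := fun a p => a (σ p.1, p.2) * a (i, p.2) with hTdef
    set f : EA → EN → EN := fun a x t => a (i, t) * x t with hfdef
    have hTmeas : Measurable T := measurable_pi_lambda _ fun p =>
      (measurable_pi_apply _).mul (measurable_pi_apply _)
    have hfmeas : Measurable (fun p : EA × EN => f p.1 p.2) :=
      measurable_pi_lambda _ fun t =>
        ((measurable_pi_apply ((i, t) : Fin m × Fin n)).comp measurable_fst).mul
          ((measurable_pi_apply t).comp measurable_snd)
    have hT : να.map T = να := by
      rw [hνα, hTdef, hσdef]
      exact pi_sign_map_invariant c h0 h1 i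
    have hflip : ∀ a ∈ SA, νN.map (f a) = νN := by
      intro a ha
      have hε : ∀ t, a (i, t) = 1 ∨ a (i, t) = -1 := by
        intro t
        have := ha (i, t) (Set.mem_univ _)
        unfold signF at this
        split at this
        · left; simpa using this
        · simpa using this
      rw [hνN, hfdef]
      exact pi_map_flip _ hsymm' _ hε
    have hΨinv : ν.map (fun e : EA × EN => (T e.1, f e.1 e.2)) = ν := by
      rw [hν]
      exact prod_map_skew να νN T hTmeas hT f hfmeas SA hnullA hflip
    have hΨmeas : Measurable (fun e : EA × EN => (T e.1, f e.1 e.2)) :=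
      (hTmeas.comp measurable_fst).prodMk hfmeas
    have hSE : ν ({e : EA × EN | e.1 ∈ SA})ᶜ = 0 := by
      have hseteq : ({e : EA × EN | e.1 ∈ SA})ᶜ = SAᶜ ×ˢ (Set.univ : Set EN) := by
        ext e; simp
      rw [hν, hseteq, Measure.prod_prod, hnullA, zero_mul]
    have hζΨ : ∀ e : EA × EN, e.1 ∈ SA → ∀ j, ζ j (T e.1, f e.1 e.2) = ζ (σ j) e := by
      intro e he j
      have hsq : ∀ t, e.1 (i, t) * e.1 (i, t) = 1 := by
        intro t
        have := he (i, t) (Set.mem_univ _)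
        unfold signF at this
        split at this
        · have h1 : e.1 (i, t) = 1 := by simpa using this
          rw [h1]; norm_num
        · rcases (by simpa using this : e.1 (i, t) = 1 ∨ e.1 (i, t) = -1) with h | h <;>
            rw [h] <;> norm_num
      have hterm : ∀ t, (T e.1) (j, t) * (f e.1 e.2) t = e.1 (σ j, t) * e.2 t := by
        intro t
        have : (T e.1) (j, t) * (f e.1 e.2) t
            = e.1 (σ j, t) * (e.1 (i, t) * e.1 (i, t)) * e.2 t := by
          rw [hTdef, hfdef]; ring
        rw [this, hsq t, mul_one]
      show spsNormSq (Rhalf⁻¹ *ᵥ ((n : ℝ)⁻¹ • ∑ t, ((T e.1) (j, t) * (f e.1 e.2) t) • φ t))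
          = spsNormSq (Rhalf⁻¹ *ᵥ ((n : ℝ)⁻¹ • ∑ t, (e.1 (σ j, t) * e.2 t) • φ t))
      rw [Finset.sum_congr rfl fun t _ => by rw [hterm t]]
    have hinter : Bt i ∩ {e : EA × EN | e.1 ∈ SA}
        = (fun e : EA × EN => (T e.1, f e.1 e.2)) ⁻¹' (Bt 0) ∩ {e : EA × EN | e.1 ∈ SA} := by
      ext e
      simp only [Set.mem_inter_iff, Set.mem_setOf_eq, Set.mem_preimage, hBt]
      constructor
      · rintro ⟨hcount, he⟩
        refine ⟨?_, he⟩
        have hfe : (Finset.univ.filter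
            (fun j => ζ j (T e.1, f e.1 e.2) < ζ 0 (T e.1, f e.1 e.2)))
            = Finset.univ.filter (fun j => ζ (σ j) e < ζ i e) := by
          refine Finset.filter_congr fun j _ => ?_
          rw [hζΨ e he j, hζΨ e he 0, show σ 0 = i from Equiv.swap_apply_left 0 i]
        rw [hfe, card_filter_perm σ (fun j => ζ j e < ζ i e)]
        exact hcount
      · rintro ⟨hcount, he⟩
        refine ⟨?_, he⟩
        have hfe : (Finset.univ.filter
            (fun j => ζ j (T e.1, f e.1 e.2) < ζ 0 (T e.1, f e.1 e.2)))
            = Finset.univ.filter (fun j => ζ (σ j) e < ζ i e) := by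
          refine Finset.filter_congr fun j _ => ?_
          rw [hζΨ e he j, hζΨ e he 0, show σ 0 = i from Equiv.swap_apply_left 0 i]
        rw [hfe, card_filter_perm σ (fun j => ζ j e < ζ i e)] at hcount
        exact hcount
    calc ν (Bt i) = ν (Bt i ∩ {e : EA × EN | e.1 ∈ SA}) :=
          measure_eq_inter_support ν _ _ hSE
      _ = ν ((fun e : EA × EN => (T e.1, f e.1 e.2)) ⁻¹' (Bt 0)
            ∩ {e : EA × EN | e.1 ∈ SA}) := by rw [hinter]
      _ = ν ((fun e : EA × EN => (T e.1, f e.1 e.2)) ⁻¹' (Bt 0)) :=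
          (measure_eq_inter_support ν _ _ hSE).symm
      _ = (ν.map (fun e : EA × EN => (T e.1, f e.1 e.2))) (Bt 0) :=
          (Measure.map_apply hΨmeas (hBtmeas 0)).symm
      _ = ν (Bt 0) := by rw [hΨinv]
  -- the sum bound
  have hsum : ∑ i : Fin m, ν (Bt i) ≤ (q : ℝ≥0∞) := by
    calc ∑ i : Fin m, ν (Bt i)
        = ∫⁻ e, ∑ i : Fin m, (Bt i).indicator (1 : (EA × EN) → ℝ≥0∞) e ∂ν := by
          rw [lintegral_finset_sum _ (fun i _ => measurable_one.indicator (hBtmeas i))]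
          exact Finset.sum_congr rfl fun i _ => (lintegral_indicator_one (hBtmeas i)).symm
      _ ≤ ∫⁻ _, (q : ℝ≥0∞) ∂ν := by
          apply lintegral_mono
          intro e
          show ∑ i : Fin m, (Bt i).indicator (1 : (EA × EN) → ℝ≥0∞) e ≤ (q : ℝ≥0∞)
          have hind : ∑ i : Fin m, (Bt i).indicator (1 : (EA × EN) → ℝ≥0∞) e
              = ((Finset.univ.filter (fun i => e ∈ Bt i)).card : ℝ≥0∞) := by
            simp only [Set.indicator_apply, Pi.one_apply]
            rw [Finset.sum_boole]
          rw [hind]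
          have hcard : (Finset.univ.filter (fun i => e ∈ Bt i)).card ≤ q := by
            have h2 := rank_count_le (fun j => ζ j e) (m - q)
            have hBe : (Finset.univ.filter (fun i : Fin m => e ∈ Bt i))
                = Finset.univ.filter (fun i : Fin m =>
                    m - q ≤ (Finset.univ.filter (fun j => ζ j e < ζ i e)).card) := by
              refine Finset.filter_congr fun i _ => ?_
              rw [hBt]; rfl
            rw [hBe]
            calc _ ≤ Fintype.card (Fin m) - (m - q) := h2
              _ ≤ q := by rw [Fintype.card_fin]; omega
          exact_mod_cast Nat.cast_le.mpr hcard
      _ = q := by rw [lintegral_const, measure_univ, mul_one]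
  -- probability of the bad event
  have hbad : ν (Bt 0) ≤ (q : ℝ≥0∞) / (m : ℝ≥0∞) := by
    have hm0 : (m : ℝ≥0∞) ≠ 0 := Nat.cast_ne_zero.mpr (by omega)
    have hmtop : (m : ℝ≥0∞) ≠ ⊤ := ENNReal.natCast_ne_top m
    have hsum0 : (m : ℝ≥0∞) * ν (Bt 0) ≤ q := by
      have hone : ∀ i : Fin m, ν (Bt i) = ν (Bt 0) := by
        intro i
        rcases eq_or_ne i 0 with h | h
        · rw [h]
        · exact hswap i h
      have hall : ∑ i : Fin m, ν (Bt i) = (m : ℝ≥0∞) * ν (Bt 0) := by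
        rw [Finset.sum_congr rfl (fun i _ => hone i), Finset.sum_const, Finset.card_univ,
          Fintype.card_fin, nsmul_eq_mul]
      rw [← hall]
      exact hsum
    rw [ENNReal.le_div_iff_mul_le (Or.inl hm0) (Or.inl hmtop), mul_comm]
    exact hsum0
  -- the good event inclusion
  have hincl : (pairmap ⁻¹' (Bt 0))ᶜ ⊆
      {ω | (((θstar - θhat ω) ⬝ᵥ (Rn *ᵥ (θstar - θhat ω)) : ℝ) : EReal) ≤
        qthLargestE ((Finset.univ.filter (fun i : Fin m => i ≠ 0)).val.map
          (fun i => gammaStar φ Rhalf (fun t => φ t ⬝ᵥ θstar + N t ω)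
            (fun i t => α i t ω) i)) q} := by
    intro ω hω
    have hω' : (Finset.univ.filter
        (fun j => ζ j (pairmap ω) < ζ 0 (pairmap ω))).card < m - q := by
      simp only [Set.mem_compl_iff, Set.mem_preimage, hBt, Set.mem_setOf_eq, not_le] at hω
      exact hω
    set γf : Fin m → EReal := fun i => gammaStar φ Rhalf (fun t => φ t ⬝ᵥ θstar + N t ω)
      (fun i t => α i t ω) i with hγf
    set s : Multiset EReal := (Finset.univ.filter (fun i : Fin m => i ≠ 0)).val.map γf
      with hs
    -- counting
    have hfeq : Finset.univ.filter (fun j : Fin m => ζ j (pairmap ω) < ζ 0 (pairmap ω))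
        = Finset.univ.filter (fun j : Fin m =>
            j ≠ 0 ∧ ζ j (pairmap ω) < ζ 0 (pairmap ω)) := by
      ext j
      simp only [Finset.mem_filter, Finset.mem_univ, true_and]
      constructor
      · intro h
        refine ⟨?_, h⟩
        rintro rfl
        exact lt_irrefl _ h
      · exact And.right
    have hcard_ne : (Finset.univ.filter (fun j : Fin m => j ≠ 0)).card = m - 1 := by
      rw [Finset.filter_ne', Finset.card_erase_of_mem (Finset.mem_univ _),
        Finset.card_univ, Fintype.card_fin]
    have hsplitc : (Finset.univ.filter (fun j : Fin m =>
          j ≠ 0 ∧ ζ j (pairmap ω) < ζ 0 (pairmap ω))).card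
        + (Finset.univ.filter (fun j : Fin m =>
          j ≠ 0 ∧ ¬ (ζ j (pairmap ω) < ζ 0 (pairmap ω)))).card = m - 1 := by
      rw [← Finset.filter_filter, ← Finset.filter_filter,
        Finset.card_filter_add_card_filter_not, hcard_ne]
    set G : Finset (Fin m) := Finset.univ.filter (fun j : Fin m =>
      j ≠ 0 ∧ ¬ (ζ j (pairmap ω) < ζ 0 (pairmap ω))) with hG
    have hGcard : q ≤ G.card := by
      rw [hfeq] at hω'
      omega
    -- cardinality of s
    have hcards : Multiset.card s = m - 1 := by
      rw [hs, Multiset.card_map]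
      exact hcard_ne
    -- membership in the target set
    show (((θstar - θhat ω) ⬝ᵥ (Rn *ᵥ (θstar - θhat ω)) : ℝ) : EReal) ≤ qthLargestE s q
    rw [hL ω]
    apply le_qthLargestE s q hq (by omega)
    -- at least q elements of s are ≥ ζ 0 (pairmap ω)
    have hle : G.val.map γf ≤ s.filter (fun x => ((ζ 0 (pairmap ω) : ℝ) : EReal) ≤ x) := by
      rw [Multiset.le_filter]
      constructor
      · rw [hs]
        apply Multiset.map_le_map
        rw [Finset.val_le_iff]
        intro j hj
        simp only [hG, Finset.mem_filter, Finset.mem_univ, true_and] at hj ⊢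
        exact hj.1
      · intro x hx
        rw [Multiset.mem_map] at hx
        obtain ⟨j, hjG, rfl⟩ := hx
        have hjprop := (Finset.mem_filter.mp (Finset.mem_val.mp hjG)).2
        obtain ⟨hj0, hjZ⟩ := hjprop
        rw [not_lt] at hjZ
        have hmem : ((ζ j (pairmap ω) : ℝ) : EReal) ∈
            ((fun θ : Fin d → ℝ => ((spsNormSq (spsS φ Rhalf
                (fun t => φ t ⬝ᵥ θstar + N t ω) (fun i t => α i t ω) j θ) : ℝ) : EReal)) ''
              {θ : Fin d → ℝ | spsNormSq (spsS φ Rhalf (fun t => φ t ⬝ᵥ θstar + N t ω)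
                (fun i t => α i t ω) 0 θ) ≤ spsNormSq (spsS φ Rhalf
                (fun t => φ t ⬝ᵥ θstar + N t ω) (fun i t => α i t ω) j θ)}) := by
          refine ⟨θstar, ?_, ?_⟩
          · rw [Set.mem_setOf_eq, hZeq 0 ω, hZeq j ω]
            exact hjZ
          · show ((spsNormSq (spsS φ Rhalf (fun t => φ t ⬝ᵥ θstar + N t ω)
                (fun i t => α i t ω) j θstar) : ℝ) : EReal) = ((ζ j (pairmap ω) : ℝ) : EReal)
            exact congrArg _ (hZeq j ω)
        calc ((ζ 0 (pairmap ω) : ℝ) : EReal) ≤ ((ζ j (pairmap ω) : ℝ) : EReal) :=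
              EReal.coe_le_coe_iff.mpr hjZ
          _ ≤ γf j := le_sSup hmem
    have hcardle := Multiset.card_le_card hle
    rw [Multiset.card_map] at hcardle
    have : G.card = Multiset.card G.val := rfl
    omega
  -- final chain
  have hB0 : μ (pairmap ⁻¹' (Bt 0)) = ν (Bt 0) := by
    rw [← hmap, Measure.map_apply hpairmeas (hBtmeas 0)]
  have hmpos : (0 : ℝ) < (m : ℝ) := by
    exact_mod_cast Nat.pos_of_ne_zero (by omega)
  calc ENNReal.ofReal (1 - (q : ℝ) / m)
      ≤ 1 - ν (Bt 0) := by
        have hofq : ENNReal.ofReal ((q : ℝ) / m) = (q : ℝ≥0∞) / (m : ℝ≥0∞) := by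
          rw [ENNReal.ofReal_div_of_pos hmpos, ENNReal.ofReal_natCast,
            ENNReal.ofReal_natCast]
        have h1 : ENNReal.ofReal (1 - (q : ℝ) / m)
            = 1 - ENNReal.ofReal ((q : ℝ) / m) := by
          rw [ENNReal.ofReal_sub _ (by positivity), ENNReal.ofReal_one]
        rw [h1, hofq]
        exact tsub_le_tsub_left hbad 1
    _ = μ (pairmap ⁻¹' (Bt 0))ᶜ := by
        rw [prob_compl_eq_one_sub (hpairmeas (hBtmeas 0)), hB0]
    _ ≤ _ := measure_mono hincl

end
end

section
/- For every realization of the random signs and the random permutation, if the SPS confidence region Θ̂ₙ is non-empty, then the least-squares estimate θ̂ₙ belongs to Θ̂ₙ. -/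
open Matrix

noncomputable section

/-- The strict total order `≻_π`. -/
def SuccPi {m : ℕ} (σ : Equiv.Perm (Fin m)) (z : Fin m → ℝ) (k j : Fin m) : Prop :=
  z j < z k ∨ (z k = z j ∧ σ j < σ k)

/-- The rank `𝓡(θ)`. -/
def spsRank {d n m : ℕ} [NeZero m] (φ : Fin n → Fin d → ℝ)
    (Rhalf : Matrix (Fin d) (Fin d) ℝ) (Y : Fin n → ℝ) (a : Fin m → Fin n → ℝ)
    (σ : Equiv.Perm (Fin m)) (θ : Fin d → ℝ) : ℕ :=
  1 + Set.ncard {i : Fin m | i ≠ 0 ∧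
      SuccPi σ (fun j => spsNormSq (spsS φ Rhalf Y a j θ)) 0 i}

/-- The SPS confidence region `Θ̂ₙ`. -/
def spsRegion {d n m : ℕ} [NeZero m] (φ : Fin n → Fin d → ℝ)
    (Rhalf : Matrix (Fin d) (Fin d) ℝ) (Y : Fin n → ℝ) (a : Fin m → Fin n → ℝ)
    (σ : Equiv.Perm (Fin m)) (q : ℕ) : Set (Fin d → ℝ) :=
  {θ | spsRank φ Rhalf Y a σ θ ≤ m - q}

/-! ### Auxiliary lemmas -/

lemma spsNormSq_eq_dot {d : ℕ} (v : Fin d → ℝ) : spsNormSq v = v ⬝ᵥ v := by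
  simp [spsNormSq, dotProduct, sq]

lemma spsNormSq_nonneg {d : ℕ} (v : Fin d → ℝ) : 0 ≤ spsNormSq v :=
  Finset.sum_nonneg fun j _ => sq_nonneg _

lemma eq_zero_of_spsNormSq_eq_zero {d : ℕ} {v : Fin d → ℝ} (h : spsNormSq v = 0) : v = 0 := by
  funext j
  have := (Finset.sum_eq_zero_iff_of_nonneg (fun j _ => sq_nonneg (v j))).1 h j (Finset.mem_univ j)
  exact pow_eq_zero_iff (n := 2) (by norm_num) |>.1 this

lemma spsNormSq_zero {d : ℕ} : spsNormSq (0 : Fin d → ℝ) = 0 := by simp [spsNormSq]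

lemma vecMulVec_mulVec' {d : ℕ} (v w x : Fin d → ℝ) : vecMulVec v w *ᵥ x = (w ⬝ᵥ x) • v := by
  ext i
  simp only [mulVec, vecMulVec_apply, dotProduct, Pi.smul_apply, smul_eq_mul, Finset.sum_mul]
  exact Finset.sum_congr rfl fun j _ => by ring

lemma sum_mulVec' {d n : ℕ} (A : Fin n → Matrix (Fin d) (Fin d) ℝ) (x : Fin d → ℝ) :
    (∑ t, A t) *ᵥ x = ∑ t, A t *ᵥ x := by
  ext i
  simp only [mulVec, dotProduct, Finset.sum_apply, Matrix.sum_apply, Finset.sum_mul]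
  exact Finset.sum_comm

lemma dotProduct_sum' {d n : ℕ} (y : Fin d → ℝ) (f : Fin n → Fin d → ℝ) :
    y ⬝ᵥ (∑ t, f t) = ∑ t, y ⬝ᵥ f t := by
  simp only [dotProduct, Finset.sum_apply, Finset.mul_sum]
  exact Finset.sum_comm

lemma vecMulVec_transpose' {d : ℕ} (v w : Fin d → ℝ) : (vecMulVec v w)ᵀ = vecMulVec w v := by
  ext i j; simp [vecMulVec_apply, mul_comm]

lemma dot_mulVec_transpose {d : ℕ} (A : Matrix (Fin d) (Fin d) ℝ) (x z : Fin d → ℝ) :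
    x ⬝ᵥ (A *ᵥ z) = (Aᵀ *ᵥ x) ⬝ᵥ z := by
  rw [Matrix.mulVec_transpose, ← Matrix.dotProduct_mulVec]

/-- Key quadratic-form inequality. -/
lemma sps_key_ineq {d : ℕ} (Rhalf Q : Matrix (Fin d) (Fin d) ℝ)
    (hinv : IsUnit Rhalf.det) (hQ : Qᵀ = Q)
    (h1 : ∀ y : Fin d → ℝ, y ⬝ᵥ (Q *ᵥ y) ≤ y ⬝ᵥ ((Rhalf * Rhalfᵀ) *ᵥ y))
    (h2 : ∀ y : Fin d → ℝ, -(y ⬝ᵥ ((Rhalf * Rhalfᵀ) *ᵥ y)) ≤ y ⬝ᵥ (Q *ᵥ y))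
    (δ : Fin d → ℝ) :
    spsNormSq (Rhalf⁻¹ *ᵥ (Q *ᵥ δ)) ≤ spsNormSq (Rhalfᵀ *ᵥ δ) := by
  have hinvT : IsUnit Rhalfᵀ.det := by rwa [Matrix.det_transpose]
  set u := Rhalf⁻¹ *ᵥ (Q *ᵥ δ) with hu
  set w := Rhalfᵀ *ᵥ δ with hw
  set c := (Rhalfᵀ)⁻¹ *ᵥ u with hc
  have hfc : Rhalfᵀ *ᵥ c = u := by
    rw [hc, Matrix.mulVec_mulVec, Matrix.mul_nonsing_inv _ hinvT, Matrix.one_mulVec]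
  have hQδ : Q *ᵥ δ = Rhalf *ᵥ u := by
    rw [hu, Matrix.mulVec_mulVec, Matrix.mul_nonsing_inv _ hinv, Matrix.one_mulVec]
  have hR : ∀ x : Fin d → ℝ, x ⬝ᵥ ((Rhalf * Rhalfᵀ) *ᵥ x) = (Rhalfᵀ *ᵥ x) ⬝ᵥ (Rhalfᵀ *ᵥ x) := by
    intro x
    rw [← Matrix.mulVec_mulVec, dot_mulVec_transpose]
  have hqcd : c ⬝ᵥ (Q *ᵥ δ) = u ⬝ᵥ u := by
    rw [hQδ, dot_mulVec_transpose, hfc]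
  have hqdc : δ ⬝ᵥ (Q *ᵥ c) = u ⬝ᵥ u := by
    rw [dot_mulVec_transpose, hQ, dotProduct_comm, hqcd]
  have e1 := h1 (c + δ)
  have e2 := h2 (c - δ)
  rw [hR] at e1 e2
  have hfadd : Rhalfᵀ *ᵥ (c + δ) = u + w := by rw [Matrix.mulVec_add, hfc]
  have hfsub : Rhalfᵀ *ᵥ (c - δ) = u - w := by rw [Matrix.mulVec_sub, hfc]
  rw [hfadd] at e1
  rw [hfsub] at e2
  have hexp1 : (c + δ) ⬝ᵥ (Q *ᵥ (c + δ)) =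
      c ⬝ᵥ (Q *ᵥ c) + c ⬝ᵥ (Q *ᵥ δ) + δ ⬝ᵥ (Q *ᵥ c) + δ ⬝ᵥ (Q *ᵥ δ) := by
    simp only [Matrix.mulVec_add, add_dotProduct, dotProduct_add]; ring
  have hexp2 : (c - δ) ⬝ᵥ (Q *ᵥ (c - δ)) =
      c ⬝ᵥ (Q *ᵥ c) - c ⬝ᵥ (Q *ᵥ δ) - δ ⬝ᵥ (Q *ᵥ c) + δ ⬝ᵥ (Q *ᵥ δ) := by
    simp only [Matrix.mulVec_sub, sub_dotProduct, dotProduct_sub]; ring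
  rw [hexp1, hqcd, hqdc] at e1
  rw [hexp2, hqcd, hqdc] at e2
  have h3 : (u + w) ⬝ᵥ (u + w) = u ⬝ᵥ u + 2 * (u ⬝ᵥ w) + w ⬝ᵥ w := by
    simp only [add_dotProduct, dotProduct_add, dotProduct_comm w u]; ring
  have h4 : (u - w) ⬝ᵥ (u - w) = u ⬝ᵥ u - 2 * (u ⬝ᵥ w) + w ⬝ᵥ w := by
    simp only [sub_dotProduct, dotProduct_sub, dotProduct_comm w u]; ring
  rw [h3] at e1
  rw [h4] at e2
  rw [spsNormSq_eq_dot, spsNormSq_eq_dot]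
  linarith

/-- quadratic form of a sign-weighted design matrix. -/
lemma sps_quad_form {d n : ℕ} (φ : Fin n → Fin d → ℝ) (cf : Fin n → ℝ) (y : Fin d → ℝ) :
    y ⬝ᵥ (((n : ℝ)⁻¹ • ∑ t, cf t • vecMulVec (φ t) (φ t)) *ᵥ y)
      = (n : ℝ)⁻¹ * ∑ t, cf t * (φ t ⬝ᵥ y) ^ 2 := by
  rw [Matrix.smul_mulVec, dotProduct_smul, smul_eq_mul]
  congr 1
  rw [sum_mulVec' (fun t => cf t • vecMulVec (φ t) (φ t)), dotProduct_sum']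
  refine Finset.sum_congr rfl fun t _ => ?_
  rw [Matrix.smul_mulVec, vecMulVec_mulVec', dotProduct_smul, dotProduct_smul,
    smul_eq_mul, smul_eq_mul, dotProduct_comm y (φ t)]
  ring

/-- For every realization of the random signs and the random permutation, if the SPS
confidence region is non-empty then it contains the least-squares estimate. -/
theorem lse_mem_sps_region_of_nonempty
    (d n m q : ℕ) [NeZero m] (hn : 0 < n) (hq : 0 < q) (hqm : q < m)
    (φ : Fin n → Fin d → ℝ) (Y : Fin n → ℝ)
    (Rn : Matrix (Fin d) (Fin d) ℝ)
    (hRn : Rn = (n : ℝ)⁻¹ • ∑ t, vecMulVec (φ t) (φ t))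
    (hPD : Rn.PosDef)
    (Rhalf : Matrix (Fin d) (Fin d) ℝ)
    (hRhalfInv : IsUnit Rhalf.det)
    (hfact : Rhalf * Rhalfᵀ = Rn)
    (θhat : Fin d → ℝ)
    (hθhat : θhat = (∑ t, vecMulVec (φ t) (φ t))⁻¹ *ᵥ ∑ t, Y t • φ t)
    (a : Fin m → Fin n → ℝ)
    (ha0 : ∀ t, a 0 t = 1)
    (ha : ∀ i t, a i t = 1 ∨ a i t = -1)
    (π : Equiv.Perm (Fin m))
    (hne : (spsRegion φ Rhalf Y a π q).Nonempty) :
    θhat ∈ spsRegion φ Rhalf Y a π q := by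
  have hnne : (n : ℝ) ≠ 0 := Nat.cast_ne_zero.2 hn.ne'
  have hninv : ((n : ℝ))⁻¹ ≠ 0 := inv_ne_zero hnne
  set M : Matrix (Fin d) (Fin d) ℝ := ∑ t, vecMulVec (φ t) (φ t) with hMdef
  have hM : M = (n : ℝ) • Rn := by
    rw [hRn, smul_smul, mul_inv_cancel₀ hnne, one_smul]
  have hMdet : IsUnit M.det := by
    rw [hM, Matrix.det_smul]
    exact (isUnit_iff_ne_zero).2 (mul_ne_zero (pow_ne_zero _ hnne) hPD.det_pos.ne')
  -- normal equations
  have hnormal : ∑ t, (Y t - φ t ⬝ᵥ θhat) • φ t = 0 := by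
    have hMθ : M *ᵥ θhat = ∑ t, Y t • φ t := by
      rw [hθhat, Matrix.mulVec_mulVec, Matrix.mul_nonsing_inv _ hMdet, Matrix.one_mulVec]
    have hMθ' : M *ᵥ θhat = ∑ t, (φ t ⬝ᵥ θhat) • φ t := by
      rw [hMdef, sum_mulVec']
      exact Finset.sum_congr rfl fun t _ => vecMulVec_mulVec' _ _ _
    calc ∑ t, (Y t - φ t ⬝ᵥ θhat) • φ t
        = ∑ t, (Y t • φ t - (φ t ⬝ᵥ θhat) • φ t) := by
          refine Finset.sum_congr rfl fun t _ => ?_; rw [sub_smul]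
      _ = (∑ t, Y t • φ t) - ∑ t, (φ t ⬝ᵥ θhat) • φ t := Finset.sum_sub_distrib _ _
      _ = 0 := by rw [← hMθ, hMθ']; exact sub_self _
  set r : Fin n → ℝ := fun t => Y t - φ t ⬝ᵥ θhat with hr
  set E : Fin m → Fin d → ℝ := fun i => ∑ t, (a i t * r t) • φ t with hE
  set N : Fin m → Matrix (Fin d) (Fin d) ℝ := fun i => ∑ t, a i t • vecMulVec (φ t) (φ t)
    with hNdef
  have hE0 : E 0 = 0 := by
    rw [hE]; simp only [ha0, one_mul]
    exact hnormal
  have hN0 : N 0 = M := by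
    rw [hNdef, hMdef]; simp only [ha0, one_smul]
  -- decomposition of spsS
  have hdecomp : ∀ (i : Fin m) (θ : Fin d → ℝ),
      spsS φ Rhalf Y a i θ = Rhalf⁻¹ *ᵥ ((n : ℝ)⁻¹ • (E i + N i *ᵥ (θhat - θ))) := by
    intro i θ
    have hterm : ∀ t, (a i t * (Y t - φ t ⬝ᵥ θ)) • φ t
        = (a i t * r t) • φ t + a i t • ((φ t ⬝ᵥ (θhat - θ)) • φ t) := by
      intro t
      rw [smul_smul, ← add_smul]
      congr 1
      simp only [dotProduct_sub, hr]
      ring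
    have hsum : ∑ t, (a i t * (Y t - φ t ⬝ᵥ θ)) • φ t = E i + N i *ᵥ (θhat - θ) := by
      simp only [hterm]
      rw [Finset.sum_add_distrib]
      congr 1
      rw [hNdef, sum_mulVec']
      refine Finset.sum_congr rfl fun t _ => ?_
      rw [Matrix.smul_mulVec, vecMulVec_mulVec']
    unfold spsS
    rw [hsum]
  set z : (Fin d → ℝ) → Fin m → ℝ := fun θ i => spsNormSq (spsS φ Rhalf Y a i θ) with hz
  -- S_0(θhat) = 0
  have hS0hat : spsS φ Rhalf Y a 0 θhat = 0 := by
    rw [hdecomp, sub_self, Matrix.mulVec_zero, add_zero, hE0, smul_zero, Matrix.mulVec_zero]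
  have hz0hat : z θhat 0 = 0 := by rw [hz]; simp only [hS0hat, spsNormSq_zero]
  -- the key subset relation
  obtain ⟨θ₀, hθ₀⟩ := hne
  have hsubset : {i : Fin m | i ≠ 0 ∧ SuccPi π (z θhat) 0 i}
      ⊆ {i : Fin m | i ≠ 0 ∧ SuccPi π (z θ₀) 0 i} := by
    intro i hi
    obtain ⟨hi0, hsucc⟩ := hi
    -- from SuccPi at θhat : z θhat i = 0 and π i < π 0
    have hzi0 : z θhat i = 0 ∧ π i < π 0 := by
      rcases hsucc with h | ⟨h, hlt⟩
      · exact absurd (hz0hat ▸ h) (not_lt.2 (spsNormSq_nonneg _))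
      · exact ⟨(hz0hat ▸ h).symm, hlt⟩
    obtain ⟨hzi, hπlt⟩ := hzi0
    -- E i = 0
    have hSihat : spsS φ Rhalf Y a i θhat = 0 := eq_zero_of_spsNormSq_eq_zero hzi
    have hEi : E i = 0 := by
      have h1 : Rhalf⁻¹ *ᵥ ((n : ℝ)⁻¹ • (E i + N i *ᵥ (θhat - θhat))) = 0 := by
        rw [← hdecomp]; exact hSihat
      rw [sub_self, Matrix.mulVec_zero, add_zero] at h1
      have h2 : Rhalf *ᵥ (Rhalf⁻¹ *ᵥ ((n : ℝ)⁻¹ • E i)) = 0 := by rw [h1, Matrix.mulVec_zero]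
      rw [Matrix.mulVec_mulVec, Matrix.mul_nonsing_inv _ hRhalfInv, Matrix.one_mulVec] at h2
      rcases smul_eq_zero.1 h2 with h | h
      · exact absurd h hninv
      · exact h
    -- set δ and Qi
    set δ : Fin d → ℝ := θhat - θ₀ with hδ
    set Qi : Matrix (Fin d) (Fin d) ℝ := (n : ℝ)⁻¹ • N i with hQi
    have hSi : spsS φ Rhalf Y a i θ₀ = Rhalf⁻¹ *ᵥ (Qi *ᵥ δ) := by
      rw [hdecomp, hEi, zero_add, hQi, Matrix.smul_mulVec]
    have hS0 : spsS φ Rhalf Y a 0 θ₀ = Rhalfᵀ *ᵥ δ := by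
      rw [hdecomp, hE0, zero_add, hN0]
      have h5 : (n : ℝ)⁻¹ • (M *ᵥ δ) = Rn *ᵥ δ := by
        rw [← Matrix.smul_mulVec, ← hRn]
      rw [h5, Matrix.mulVec_mulVec, ← hfact, ← mul_assoc,
        Matrix.nonsing_inv_mul _ hRhalfInv, one_mul]
    -- quadratic form bounds
    have hQisymm : Qiᵀ = Qi := by
      rw [hQi, hNdef, Matrix.transpose_smul, Matrix.transpose_sum]
      congr 1
      exact Finset.sum_congr rfl fun t _ => by
        rw [Matrix.transpose_smul, vecMulVec_transpose']
    have hRform : ∀ y : Fin d → ℝ,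
        y ⬝ᵥ ((Rhalf * Rhalfᵀ) *ᵥ y) = (n : ℝ)⁻¹ * ∑ t, (φ t ⬝ᵥ y) ^ 2 := by
      intro y
      rw [hfact, hRn]
      have := sps_quad_form φ (fun _ => (1 : ℝ)) y
      simpa using this
    have hQform : ∀ y : Fin d → ℝ,
        y ⬝ᵥ (Qi *ᵥ y) = (n : ℝ)⁻¹ * ∑ t, a i t * (φ t ⬝ᵥ y) ^ 2 := by
      intro y
      rw [hQi, hNdef]
      exact sps_quad_form φ (a i) y
    have hninvpos : (0 : ℝ) ≤ ((n : ℝ))⁻¹ := inv_nonneg.2 (Nat.cast_nonneg n)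
    have hb1 : ∀ y : Fin d → ℝ, y ⬝ᵥ (Qi *ᵥ y) ≤ y ⬝ᵥ ((Rhalf * Rhalfᵀ) *ᵥ y) := by
      intro y
      rw [hQform, hRform]
      refine mul_le_mul_of_nonneg_left (Finset.sum_le_sum fun t _ => ?_) hninvpos
      rcases ha i t with h | h <;> rw [h] <;> nlinarith [sq_nonneg (φ t ⬝ᵥ y)]
    have hb2 : ∀ y : Fin d → ℝ, -(y ⬝ᵥ ((Rhalf * Rhalfᵀ) *ᵥ y)) ≤ y ⬝ᵥ (Qi *ᵥ y) := by
      intro y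
      rw [hQform, hRform, ← mul_neg, ← Finset.sum_neg_distrib]
      refine mul_le_mul_of_nonneg_left (Finset.sum_le_sum fun t _ => ?_) hninvpos
      rcases ha i t with h | h <;> rw [h] <;> nlinarith [sq_nonneg (φ t ⬝ᵥ y)]
    -- key inequality
    have hkey : z θ₀ i ≤ z θ₀ 0 := by
      rw [hz]
      simp only
      rw [hSi, hS0]
      exact sps_key_ineq Rhalf Qi hRhalfInv hQisymm hb1 hb2 δ
    refine ⟨hi0, ?_⟩
    rcases lt_or_eq_of_le hkey with h | h
    · exact Or.inl h
    · exact Or.inr ⟨h.symm, hπlt⟩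
  -- conclude
  have hcard : spsRank φ Rhalf Y a π θhat ≤ spsRank φ Rhalf Y a π θ₀ := by
    unfold spsRank
    exact Nat.add_le_add_left (Set.ncard_le_ncard hsubset (Set.toFinite _)) 1
  exact le_trans hcard hθ₀

end
end
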